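/- For nonnegative integers n, k with n ≤ 2^k, D(2^(k+1) + n − 1) = 2^k − n + D(2^k + n − 1). -/

import Mathlib

/-- f m = (#1 digits) - (#0 digits) in the binary expansion of m. -/
def f (m : ℕ) : ℤ :=
  2 * ((Nat.digits 2 m).count 1 : ℤ) - ((Nat.digits 2 m).length : ℤ)

/-- Cumulated deficient binary digit sum (OEIS A268289), D 0 = 0. -/
def D (n : ℕ) : ℤ := ∑ m ∈ Finset.Icc 1 n, f m

lemma f_even (m : ℕ) (hm : 0 < m) : f (2 * m) = f m - 1 := by
  have h : Nat.digits 2 (2 * m) = 0 :: Nat.digits 2 m := by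
    rw [Nat.digits_def' (by norm_num : (1:ℕ) < 2) (by omega)]
    congr 1
    · omega
    · congr 1; omega
  simp [f, h]
  ring

lemma f_odd (m : ℕ) : f (2 * m + 1) = f m + 1 := by
  have h : Nat.digits 2 (2 * m + 1) = 1 :: Nat.digits 2 m := by
    rw [Nat.digits_def' (by norm_num : (1:ℕ) < 2) (by omega)]
    congr 1
    · omega
    · congr 1; omega
  simp only [f, h, List.count_cons, List.length_cons]
  norm_num
  ring

lemma D_succ (n : ℕ) : D (n + 1) = D n + f (n + 1) := by
  unfold D
  rw [← Finset.sum_Icc_succ_top (by omega)]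

lemma D_odd (n : ℕ) : D (2 * n + 1) = 2 * D n + 1 := by
  induction n with
  | zero => simp [D, f]
  | succ n ih =>
    have h1 : 2 * (n + 1) + 1 = (2 * n + 1) + 1 + 1 := by ring
    rw [h1, D_succ, D_succ, ih]
    have e1 : 2 * n + 1 + 1 = 2 * (n + 1) := by ring
    rw [e1, f_even (n + 1) (by omega), f_odd (n + 1), D_succ]
    ring

lemma D_pow (k : ℕ) : D (2 ^ k - 1) = 2 ^ k - 1 := by
  induction k with
  | zero => simp [D]
  | succ k ih =>
    have h1 : 2 ^ (k + 1) - 1 = 2 * (2 ^ k - 1) + 1 := by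
      have : 1 ≤ 2 ^ k := Nat.one_le_two_pow
      omega
    rw [h1, D_odd, ih]
    ring

lemma f_shift (a : ℕ) : ∀ n : ℕ, n < 2 ^ a →
    f (2 ^ (a + 1) + n) = f (2 ^ a + n) - 1 := by
  induction a with
  | zero =>
    intro n hn
    interval_cases n
    simp [f, Nat.digits_def']
  | succ a ih =>
    intro n hn
    rcases Nat.even_or_odd n with ⟨q, hq⟩ | ⟨q, hq⟩
    · have hq2 : q < 2 ^ a := by
        have := Nat.one_le_two_pow (n := a); omega
      have e1 : 2 ^ (a + 1 + 1) + n = 2 * (2 ^ (a + 1) + q) := by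
        rw [hq]; ring
      have e2 : 2 ^ (a + 1) + n = 2 * (2 ^ a + q) := by
        rw [hq]; ring
      rw [e1, e2, f_even _ (by positivity), f_even _ (by positivity), ih q hq2]
    · have hq2 : q < 2 ^ a := by
        have := Nat.one_le_two_pow (n := a)
        omega
      have e1 : 2 ^ (a + 1 + 1) + n = 2 * (2 ^ (a + 1) + q) + 1 := by
        rw [hq]; ring
      have e2 : 2 ^ (a + 1) + n = 2 * (2 ^ a + q) + 1 := by
        rw [hq]; ring
      rw [e1, e2, f_odd, f_odd, ih q hq2]
      ring

theorem stmt_14 (n k : ℕ) (h : n ≤ 2 ^ k) :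
    D (2 ^ (k + 1) + n - 1) = 2 ^ k - n + D (2 ^ k + n - 1) := by
  induction n with
  | zero =>
    have e1 : 2 ^ (k + 1) + 0 - 1 = 2 ^ (k + 1) - 1 := by omega
    have e2 : 2 ^ k + 0 - 1 = 2 ^ k - 1 := by omega
    rw [e1, e2, D_pow, D_pow]
    push_cast
    ring
  | succ n ih =>
    have hn : n < 2 ^ k := by omega
    have h1 : 1 ≤ 2 ^ k := Nat.one_le_two_pow
    have e1 : 2 ^ (k + 1) + (n + 1) - 1 = (2 ^ (k + 1) + n - 1) + 1 := by
      have : 1 ≤ 2 ^ (k + 1) := Nat.one_le_two_pow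
      omega
    have e1' : (2 ^ (k + 1) + n - 1) + 1 = 2 ^ (k + 1) + n := by
      have : 1 ≤ 2 ^ (k + 1) := Nat.one_le_two_pow
      omega
    have e2 : 2 ^ k + (n + 1) - 1 = (2 ^ k + n - 1) + 1 := by omega
    have e2' : (2 ^ k + n - 1) + 1 = 2 ^ k + n := by omega
    rw [e1, D_succ, e1', e2, D_succ, e2', f_shift k n hn, ih (by omega)]
    push_cast
    ring
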